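/- For all A, B > 0, the integral from 0 to infinity of Γ(-1/2, 4πAy)·e^{-4πBy} dy equals (1/(2√π·B))·(√(1 + B/A) − 1), where Γ(s,x) denotes the upper incomplete gamma function. -/

import Mathlib

open MeasureTheory Set Real Filter

/-- The upper incomplete gamma function `Γ(s, x) = ∫_x^∞ t^(s-1) e^(-t) dt`. -/
noncomputable def upperIncompleteGamma (s x : ℝ) : ℝ :=
  ∫ t in Set.Ioi x, t ^ (s - 1) * Real.exp (-t)


lemma int_exp_aux {s r : ℝ} (hs : -1 < s) (hr : 0 < r) :
    IntegrableOn (fun t : ℝ => t ^ s * Real.exp (-(r * t))) (Ioi 0) := by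
  have h := integrableOn_rpow_mul_exp_neg_mul_rpow (p := 1) hs one_pos hr
  refine h.congr_fun (fun x hx => ?_) measurableSet_Ioi
  simp only [Real.rpow_one, neg_mul]

lemma gamma_half_int {r : ℝ} (hr : 0 < r) :
    ∫ t in Ioi (0:ℝ), t ^ (-(1:ℝ)/2) * Real.exp (-(r * t)) = Real.sqrt Real.pi / Real.sqrt r := by
  have h := Real.integral_rpow_mul_exp_neg_mul_Ioi (a := 1/2) (by norm_num) hr
  rw [show (1:ℝ)/2 - 1 = -(1:ℝ)/2 by norm_num] at h
  rw [h, Real.Gamma_one_half_eq, ← Real.sqrt_eq_rpow, Real.sqrt_div' 1 hr.le, Real.sqrt_one]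
  ring

lemma psi_meas {c : ℝ} : AEStronglyMeasurable
    (fun t : ℝ => t ^ (-(3:ℝ)/2) * (Real.exp (-t) - Real.exp (-(c * t)))) (volume.restrict (Ioi (0:ℝ))) := by
  apply Measurable.aestronglyMeasurable
  fun_prop

lemma exp_sub_exp_le {c t : ℝ} (hc : 1 < c) (ht0 : 0 < t) :
    Real.exp (-t) - Real.exp (-(c*t)) ≤ (c-1)*t := by
  have h1 : Real.exp (-t) - Real.exp (-(c*t)) = Real.exp (-t) * (1 - Real.exp (-((c-1)*t))) := by
    rw [mul_sub, mul_one, ← Real.exp_add]; ring_nf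
  have h2 : 1 - Real.exp (-((c-1)*t)) ≤ (c-1)*t := by
    have := Real.add_one_le_exp (-((c-1)*t)); linarith
  have h3 : Real.exp (-t) ≤ 1 := Real.exp_le_one_iff.2 (by linarith)
  have hc0 : 0 ≤ 1 - Real.exp (-((c-1)*t)) := by
    have : Real.exp (-((c-1)*t)) ≤ 1 := Real.exp_le_one_iff.2 (by nlinarith)
    linarith
  calc Real.exp (-t) - Real.exp (-(c*t)) = Real.exp (-t) * (1 - Real.exp (-((c-1)*t))) := h1
    _ ≤ 1 * ((c-1)*t) := mul_le_mul h3 h2 hc0 zero_le_one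
    _ = (c-1)*t := one_mul _

lemma exp_sub_exp_nonneg {c t : ℝ} (hc : 1 < c) (ht0 : 0 ≤ t) :
    0 ≤ Real.exp (-t) - Real.exp (-(c*t)) := by
  apply sub_nonneg.2; apply Real.exp_le_exp.2; nlinarith

lemma psi_integrable {c : ℝ} (hc : 1 < c) :
    IntegrableOn (fun t : ℝ => t ^ (-(3:ℝ)/2) * (Real.exp (-t) - Real.exp (-(c * t)))) (Ioi 0) := by
  rw [← Set.Ioc_union_Ioi_eq_Ioi (zero_le_one (α := ℝ))]
  apply IntegrableOn.union
  · have hint : IntegrableOn (fun t : ℝ => (c-1) * t ^ (-(1:ℝ)/2)) (Ioc (0:ℝ) 1) := by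
      apply Integrable.const_mul
      have := (intervalIntegral.intervalIntegrable_rpow' (a := 0) (b := 1) (r := -(1:ℝ)/2) (by norm_num))
      rwa [intervalIntegrable_iff_integrableOn_Ioc_of_le zero_le_one] at this
    refine hint.mono' (psi_meas.mono_measure (Measure.restrict_mono Ioc_subset_Ioi_self le_rfl)) ?_
    filter_upwards [ae_restrict_mem measurableSet_Ioc] with t ht
    have ht0 : 0 < t := ht.1
    rw [norm_mul, Real.norm_rpow_of_nonneg ht0.le, Real.norm_eq_abs t, abs_of_pos ht0,
      Real.norm_eq_abs, abs_of_nonneg (exp_sub_exp_nonneg hc ht0.le)]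
    calc t ^ (-(3:ℝ)/2) * (Real.exp (-t) - Real.exp (-(c*t)))
        ≤ t ^ (-(3:ℝ)/2) * ((c-1)*t) := by
          exact mul_le_mul_of_nonneg_left (exp_sub_exp_le hc ht0) (Real.rpow_nonneg ht0.le _)
      _ = (c-1) * (t ^ (-(3:ℝ)/2) * t) := by ring
      _ = (c-1) * t ^ (-(1:ℝ)/2) := by
          rw [← Real.rpow_add_one ht0.ne']; norm_num
  · have hint : IntegrableOn (fun t : ℝ => Real.exp (-t) + Real.exp (-(c*t))) (Ioi (1:ℝ)) := by
      apply Integrable.add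
      · exact (by simpa using exp_neg_integrableOn_Ioi 1 one_pos : IntegrableOn (fun t:ℝ => Real.exp (-t)) (Ioi 1))
      · have := exp_neg_integrableOn_Ioi 1 (lt_trans one_pos hc)
        refine this.congr_fun (fun x hx => by simp only [neg_mul]) measurableSet_Ioi
    refine hint.mono' (psi_meas.mono_measure (Measure.restrict_mono (Ioi_subset_Ioi zero_le_one) le_rfl)) ?_
    filter_upwards [ae_restrict_mem measurableSet_Ioi] with t ht
    have ht1 : (1:ℝ) ≤ t := le_of_lt ht
    have ht0 : 0 < t := lt_of_lt_of_le one_pos ht1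
    rw [norm_mul, Real.norm_rpow_of_nonneg ht0.le, Real.norm_eq_abs t, abs_of_pos ht0]
    have h1 : t ^ (-(3:ℝ)/2) ≤ 1 := Real.rpow_le_one_of_one_le_of_nonpos ht1 (by norm_num)
    have h2 : ‖Real.exp (-t) - Real.exp (-(c*t))‖ ≤ Real.exp (-t) + Real.exp (-(c*t)) := by
      refine (norm_sub_le _ _).trans ?_
      simp [Real.norm_eq_abs, abs_of_pos (Real.exp_pos _), le_refl]
    calc t ^ (-(3:ℝ)/2) * ‖Real.exp (-t) - Real.exp (-(c*t))‖
        ≤ 1 * (Real.exp (-t) + Real.exp (-(c*t))) := by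
          apply mul_le_mul h1 h2 (norm_nonneg _) zero_le_one
      _ = _ := one_mul _


lemma key_identity {c : ℝ} (hc : 1 < c) :
    ∫ t in Ioi (0:ℝ), t ^ (-(3:ℝ)/2) * (Real.exp (-t) - Real.exp (-(c * t)))
      = 2 * Real.sqrt Real.pi * (Real.sqrt c - 1) := by
  have hc0 : (0:ℝ) < c := lt_trans one_pos hc
  set g : ℝ → ℝ := fun t => Real.exp (-t) - Real.exp (-(c * t)) with hg
  set H : ℝ → ℝ := fun t => -2 * t ^ (-(1:ℝ)/2) * g t with hH
  set H' : ℝ → ℝ := fun t => t ^ (-(3:ℝ)/2) * g t - 2 * t ^ (-(1:ℝ)/2) * (c * Real.exp (-(c*t)) - Real.exp (-t)) with hH'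
  have hH0 : H 0 = 0 := by simp [hH, hg]
  -- derivative
  have hderiv : ∀ x ∈ Ioi (0:ℝ), HasDerivAt H (H' x) x := by
    intro x hx
    have hx0 : (0:ℝ) < x := hx
    have h1 : HasDerivAt (fun t:ℝ => t ^ (-(1:ℝ)/2)) ((-(1:ℝ)/2) * x ^ (-(1:ℝ)/2 - 1)) x :=
      Real.hasDerivAt_rpow_const (Or.inl (ne_of_gt hx0))
    have ha : HasDerivAt (fun t:ℝ => Real.exp (-t)) (-Real.exp (-x)) x := by
      exact ((Real.hasDerivAt_exp (-x)).comp x (hasDerivAt_neg x)).congr_deriv (by ring)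
    have hb : HasDerivAt (fun t:ℝ => Real.exp (-(c*t))) (-(c * Real.exp (-(c*x)))) x := by
      have := (Real.hasDerivAt_exp (-(c*x))).comp x (((hasDerivAt_id x).const_mul c).neg)
      exact this.congr_deriv (by ring)
    have h2 : HasDerivAt g (-Real.exp (-x) + c * Real.exp (-(c*x))) x := by
      exact (ha.sub hb).congr_deriv (by ring)
    have h3 := (h1.const_mul (-2)).mul h2
    refine h3.congr_deriv ?_
    have he : x ^ (-(1:ℝ)/2 - 1) = x ^ (-(3:ℝ)/2) := by norm_num
    rw [hH', he]
    ring
  -- integrability of H'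
  have hint : IntegrableOn H' (Ioi (0:ℝ)) := by
    have i1 := psi_integrable hc
    have i2 := int_exp_aux (s := -(1:ℝ)/2) (r := c) (by norm_num) hc0
    have i3 := int_exp_aux (s := -(1:ℝ)/2) (r := 1) (by norm_num) one_pos
    have i4 : IntegrableOn (fun t:ℝ => 2 * t ^ (-(1:ℝ)/2) * (c * Real.exp (-(c*t)) - Real.exp (-t))) (Ioi (0:ℝ)) := by
      have h5 := ((i2.const_mul (2*c)).sub (i3.const_mul 2))
      refine IntegrableOn.congr_fun h5 (fun x hx => ?_) measurableSet_Ioi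
      simp only [Pi.sub_apply, one_mul]
      ring
    exact i1.sub i4
  -- limit at infinity
  have htop : Tendsto H atTop (nhds 0) := by
    have hr : Tendsto (fun x:ℝ => x ^ (-(1:ℝ)/2)) atTop (nhds 0) := by
      have := tendsto_rpow_neg_atTop (y := (1:ℝ)/2) (by norm_num)
      simpa [neg_div] using this
    have he1 : Tendsto (fun x:ℝ => Real.exp (-x)) atTop (nhds 0) :=
      Real.tendsto_exp_neg_atTop_nhds_zero
    have he2 : Tendsto (fun x:ℝ => Real.exp (-(c*x))) atTop (nhds 0) := by
      have hmul : Tendsto (fun x:ℝ => c * x) atTop atTop :=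
        (tendsto_const_mul_atTop_of_pos hc0).2 tendsto_id
      exact he1.comp hmul
    have hgto : Tendsto g atTop (nhds 0) := by simpa using he1.sub he2
    have hfin := (hr.const_mul (-2)).mul hgto
    simp only [mul_zero, zero_mul] at hfin
    exact hfin
  -- continuity within at 0
  have hcont : ContinuousWithinAt H (Ici (0:ℝ)) 0 := by
    rw [ContinuousWithinAt, hH0]
    apply squeeze_zero_norm' (a := fun t => 2*(c-1) * Real.sqrt t)
    · filter_upwards [eventually_mem_nhdsWithin] with t (ht : t ∈ Ici (0:ℝ))
      rcases eq_or_lt_of_le (mem_Ici.1 ht) with h | h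
      · simp [hH, hg, ← h]
      · have hb := exp_sub_exp_le hc h
        have hnn := exp_sub_exp_nonneg hc h.le
        rw [hH]
        simp only [hg, norm_mul, Real.norm_eq_abs, abs_of_nonneg hnn,
          abs_of_nonneg (Real.rpow_nonneg h.le _)]
        calc |(-2:ℝ)| * t ^ (-(1:ℝ)/2) * (Real.exp (-t) - Real.exp (-(c*t)))
            ≤ 2 * t ^ (-(1:ℝ)/2) * ((c-1)*t) := by
              rw [abs_of_nonpos (by norm_num : (-2:ℝ) ≤ 0), neg_neg]
              exact mul_le_mul_of_nonneg_left hb (by positivity)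
          _ = 2*(c-1) * (t ^ (-(1:ℝ)/2) * t) := by ring
          _ = 2*(c-1) * Real.sqrt t := by
              rw [← Real.rpow_add_one h.ne', Real.sqrt_eq_rpow]; norm_num
    · have : Tendsto (fun t:ℝ => 2*(c-1) * Real.sqrt t) (nhds 0) (nhds (2*(c-1) * Real.sqrt 0)) :=
        (continuous_const.mul Real.continuous_sqrt).tendsto 0
      simp only [Real.sqrt_zero, mul_zero] at this
      exact this.mono_left nhdsWithin_le_nhds
  have hFTC := integral_Ioi_of_hasDerivAt_of_tendsto hcont hderiv hint htop
  rw [hH0, sub_zero] at hFTC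
  -- now split the integral
  have i2 := int_exp_aux (s := -(1:ℝ)/2) (r := c) (by norm_num) hc0
  have i3 := int_exp_aux (s := -(1:ℝ)/2) (r := 1) (by norm_num) one_pos
  have e1 : ∫ t in Ioi (0:ℝ), t ^ (-(3:ℝ)/2) * g t
      = ∫ t in Ioi (0:ℝ), ((H' t + (2*c) * (t ^ (-(1:ℝ)/2) * Real.exp (-(c*t))))
          - 2 * (t ^ (-(1:ℝ)/2) * Real.exp (-(1*t)))) := by
    refine setIntegral_congr_fun measurableSet_Ioi (fun x hx => ?_)
    simp only [hH', one_mul]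
    ring
  have split : ∫ t in Ioi (0:ℝ), t ^ (-(3:ℝ)/2) * g t
      = (∫ t in Ioi (0:ℝ), H' t) + ((2*c) * ∫ t in Ioi (0:ℝ), t ^ (-(1:ℝ)/2) * Real.exp (-(c*t)))
        - (2 * ∫ t in Ioi (0:ℝ), t ^ (-(1:ℝ)/2) * Real.exp (-(1*t))) := by
    have hadd : Integrable (fun t:ℝ => H' t + (2*c) * (t ^ (-(1:ℝ)/2) * Real.exp (-(c*t))))
        (volume.restrict (Ioi (0:ℝ))) := Integrable.add hint (i2.const_mul (2*c))
    rw [e1, integral_sub hadd (i3.const_mul 2),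
      integral_add hint (i2.const_mul (2*c)), integral_const_mul, integral_const_mul]
  rw [split, hFTC, gamma_half_int hc0, gamma_half_int one_pos, Real.sqrt_one]
  rw [show (2*c) * (Real.sqrt Real.pi / Real.sqrt c) = 2 * Real.sqrt Real.pi * (c / Real.sqrt c) by ring,
    Real.div_sqrt]
  ring



lemma L0 {x : ℝ} (hx : 0 < x) :
    IntegrableOn (fun t : ℝ => t ^ (-(3:ℝ)/2) * Real.exp (-t)) (Ioi x) := by
  have hint : IntegrableOn (fun t : ℝ => x ^ (-(3:ℝ)/2) * Real.exp (-t)) (Ioi x) := by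
    apply Integrable.const_mul
    exact (by simpa using exp_neg_integrableOn_Ioi x one_pos : IntegrableOn (fun t:ℝ => Real.exp (-t)) (Ioi x))
  refine hint.mono' (Measurable.aestronglyMeasurable (by fun_prop)) ?_
  filter_upwards [ae_restrict_mem measurableSet_Ioi] with t ht
  have ht0 : 0 < t := lt_trans hx ht
  rw [norm_mul, Real.norm_rpow_of_nonneg ht0.le, Real.norm_eq_abs t, abs_of_pos ht0,
    Real.norm_eq_abs, abs_of_pos (Real.exp_pos _)]
  apply mul_le_mul_of_nonneg_right _ (Real.exp_pos _).le
  exact Real.rpow_le_rpow_of_nonpos hx (le_of_lt ht) (by norm_num)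

lemma uIG_eq {x : ℝ} :
    upperIncompleteGamma (-1/2) x = ∫ t in Ioi x, t ^ (-(3:ℝ)/2) * Real.exp (-t) := by
  unfold upperIncompleteGamma
  norm_num

lemma L1 {x : ℝ} (hx : 0 < x) :
    upperIncompleteGamma (-1/2) x ≤ 2 * x ^ (-(1:ℝ)/2) := by
  rw [uIG_eq]
  have h1 : ∫ t in Ioi x, t ^ (-(3:ℝ)/2) * Real.exp (-t) ≤ ∫ t in Ioi x, t ^ (-(3:ℝ)/2) := by
    apply setIntegral_mono_on (L0 hx) (integrableOn_Ioi_rpow_of_lt (by norm_num) hx) measurableSet_Ioi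
    intro t ht
    have ht0 : 0 < t := lt_trans hx ht
    nlinarith [Real.exp_le_one_iff.2 (neg_nonpos.2 ht0.le), Real.rpow_nonneg ht0.le (-(3:ℝ)/2),
      Real.exp_pos (-t), mul_le_mul_of_nonneg_left (Real.exp_le_one_iff.2 (neg_nonpos.2 ht0.le)) (Real.rpow_nonneg ht0.le (-(3:ℝ)/2))]
  refine h1.trans ?_
  rw [integral_Ioi_rpow_of_lt (by norm_num) hx]
  rw [show (-(3:ℝ)/2 + 1) = -(1:ℝ)/2 by norm_num]
  linarith

lemma uIG_nonneg {x : ℝ} (hx : 0 ≤ x) : 0 ≤ upperIncompleteGamma (-1/2) x := by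
  rw [uIG_eq]
  apply setIntegral_nonneg measurableSet_Ioi
  intro t ht
  have ht0 : 0 < t := lt_of_le_of_lt hx ht
  positivity



theorem incGamma_integral (A B : ℝ) (hA : 0 < A) (hB : 0 < B) :
    ∫ y in Set.Ioi (0 : ℝ),
        upperIncompleteGamma (-1/2) (4 * Real.pi * A * y) * Real.exp (-(4 * Real.pi * B * y))
      = 1 / (2 * Real.sqrt Real.pi * B) * (Real.sqrt (1 + B / A) - 1) := by
  have hpi := Real.pi_pos
  set a : ℝ := 4 * Real.pi * A with ha_def
  set b : ℝ := 4 * Real.pi * B with hb_def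
  have ha : 0 < a := by positivity
  have hb : 0 < b := by positivity
  set c : ℝ := 1 + b / a with hc_def
  have hc : 1 < c := by
    have : 0 < b / a := div_pos hb ha
    simp only [hc_def]; linarith
  set f : ℝ → ℝ → ℝ := fun y t =>
    (Ioi (a*y)).indicator (fun t => t ^ (-(3:ℝ)/2) * Real.exp (-t)) t * Real.exp (-(b*y)) with hf
  -- Step 1: rewrite integrand
  have step1 : ∀ y : ℝ, upperIncompleteGamma (-1/2) (a*y) * Real.exp (-(b*y)) = ∫ t, f y t := by
    intro y
    rw [uIG_eq, ← integral_indicator measurableSet_Ioi, ← integral_mul_const]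
  -- measurability on product
  have hmeas : AEStronglyMeasurable (Function.uncurry f)
      ((volume.restrict (Ioi (0:ℝ))).prod volume) := by
    have hfe : Function.uncurry f = fun p : ℝ × ℝ =>
        {q : ℝ × ℝ | a * q.1 < q.2}.indicator (fun q => q.2 ^ (-(3:ℝ)/2) * Real.exp (-q.2)) p
          * Real.exp (-(b * p.1)) := by
      funext p
      simp only [Function.uncurry, hf, Set.indicator_apply, mem_Ioi, mem_setOf_eq]
    rw [hfe]
    apply Measurable.aestronglyMeasurable
    apply Measurable.mul
    · exact Measurable.indicator (by fun_prop)
        (measurableSet_lt (measurable_fst.const_mul a) measurable_snd)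
    · fun_prop
  -- slice integrability
  have hslices : ∀ᵐ y ∂(volume.restrict (Ioi (0:ℝ))), Integrable (fun t => f y t) := by
    filter_upwards [ae_restrict_mem measurableSet_Ioi] with y hy
    have hay : 0 < a * y := mul_pos ha hy
    exact ((L0 hay).integrable_indicator measurableSet_Ioi).mul_const _
  -- integrability of norms
  have hnorm : Integrable (fun y => ∫ t, ‖f y t‖) (volume.restrict (Ioi (0:ℝ))) := by
    have hbd : IntegrableOn
        (fun y : ℝ => (2 * a ^ (-(1:ℝ)/2)) * (y ^ (-(1:ℝ)/2) * Real.exp (-(b*y)))) (Ioi 0) :=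
      (int_exp_aux (by norm_num) hb).const_mul _
    refine hbd.mono' hmeas.norm.integral_prod_right' ?_
    filter_upwards [ae_restrict_mem measurableSet_Ioi] with y hy
    have hay : 0 < a * y := mul_pos ha hy
    have hval : (∫ t, ‖f y t‖) = upperIncompleteGamma (-1/2) (a*y) * Real.exp (-(b*y)) := by
      rw [uIG_eq, ← integral_indicator measurableSet_Ioi, ← integral_mul_const]
      congr 1; funext t
      rw [norm_mul, Real.norm_eq_abs (Real.exp _), abs_of_pos (Real.exp_pos _)]
      congr 1
      rw [norm_indicator_eq_indicator_norm]
      by_cases hmem : t ∈ Ioi (a*y)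
      · rw [Set.indicator_of_mem hmem, Set.indicator_of_mem hmem, Real.norm_eq_abs,
          abs_of_nonneg]
        have ht0 : 0 < t := lt_trans hay hmem
        positivity
      · rw [Set.indicator_of_notMem hmem, Set.indicator_of_notMem hmem]
    rw [hval, Real.norm_eq_abs, abs_of_nonneg (mul_nonneg (uIG_nonneg hay.le) (Real.exp_pos _).le)]
    have h1 := L1 hay
    have h2 : (a*y) ^ (-(1:ℝ)/2) = a ^ (-(1:ℝ)/2) * y ^ (-(1:ℝ)/2) :=
      Real.mul_rpow ha.le hy.le
    calc upperIncompleteGamma (-1/2) (a*y) * Real.exp (-(b*y))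
        ≤ (2 * (a*y) ^ (-(1:ℝ)/2)) * Real.exp (-(b*y)) :=
          mul_le_mul_of_nonneg_right h1 (Real.exp_pos _).le
      _ = 2 * a ^ (-(1:ℝ)/2) * (y ^ (-(1:ℝ)/2) * Real.exp (-(b*y))) := by rw [h2]; ring
  have hprod : Integrable (Function.uncurry f)
      ((volume.restrict (Ioi (0:ℝ))).prod volume) :=
    (integrable_prod_iff hmeas).2 ⟨hslices, hnorm⟩
  -- inner integral evaluation
  have hexp_int : ∀ u : ℝ, ∫ y in (0:ℝ)..u, Real.exp (-(b*y)) = (1 - Real.exp (-(b*u)))/b := by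
    intro u
    have hd : ∀ y : ℝ, HasDerivAt (fun y => -Real.exp (-(b*y))/b) (Real.exp (-(b*y))) y := by
      intro y
      have h1 : HasDerivAt (fun y:ℝ => -(b*y)) (-b) y := by
        exact (((hasDerivAt_id y).const_mul b).neg).congr_deriv (by ring)
      have h2 := (Real.hasDerivAt_exp (-(b*y))).comp y h1
      have h3 := (h2.neg).div_const b
      refine h3.congr_deriv ?_
      field_simp
    rw [intervalIntegral.integral_eq_sub_of_hasDerivAt (fun y _ => hd y)
      ((Real.continuous_exp.comp (continuous_const.mul continuous_id).neg).intervalIntegrable 0 u)]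
    simp
    ring
  have inner : ∀ t : ℝ, (∫ y in Ioi (0:ℝ), f y t)
      = (Ioi (0:ℝ)).indicator
          (fun t => (1/b) * (t ^ (-(3:ℝ)/2) * (Real.exp (-t) - Real.exp (-(c*t))))) t := by
    intro t
    rcases le_or_gt t 0 with h | h
    · rw [Set.indicator_of_notMem (by simpa using h)]
      have hz : ∀ y ∈ Ioi (0:ℝ), f y t = 0 := by
        intro y hy
        have : t ∉ Ioi (a*y) := by
          simp only [mem_Ioi, not_lt]
          exact h.trans (mul_pos ha hy).le
        simp only [hf, Set.indicator_of_notMem this, zero_mul]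
      rw [setIntegral_congr_fun measurableSet_Ioi hz, integral_zero]
    · rw [Set.indicator_of_mem (mem_Ioi.2 h)]
      have key : ∀ y ∈ Ioi (0:ℝ), f y t
          = (Iio (t/a)).indicator
              (fun y => (t ^ (-(3:ℝ)/2) * Real.exp (-t)) * Real.exp (-(b*y))) y := by
        intro y hy
        by_cases hyt : y < t / a
        · rw [Set.indicator_of_mem (mem_Iio.2 hyt)]
          have : t ∈ Ioi (a*y) := by
            rw [mem_Ioi, mul_comm]
            exact (lt_div_iff₀ ha).1 hyt
          simp only [hf, Set.indicator_of_mem this]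
        · rw [Set.indicator_of_notMem (by simpa using hyt)]
          have : t ∉ Ioi (a*y) := by
            rw [mem_Ioi, mul_comm a y, not_lt]
            exact (div_le_iff₀ ha).1 (not_lt.1 hyt)
          simp only [hf, Set.indicator_of_notMem this, zero_mul]
      rw [setIntegral_congr_fun measurableSet_Ioi key, integral_indicator measurableSet_Iio,
        Measure.restrict_restrict measurableSet_Iio, Set.Iio_inter_Ioi,
        ← integral_Ioc_eq_integral_Ioo,
        ← intervalIntegral.integral_of_le (by positivity : (0:ℝ) ≤ t/a),
        intervalIntegral.integral_const_mul, hexp_int]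
      have hce : Real.exp (-t) * Real.exp (-(b*(t/a))) = Real.exp (-(c*t)) := by
        rw [← Real.exp_add]
        congr 1
        rw [hc_def]
        field_simp
        ring
      rw [← hce]
      field_simp
  -- put everything together
  rw [setIntegral_congr_fun measurableSet_Ioi (fun y _ => step1 y),
    integral_integral_swap hprod]
  simp_rw [inner]
  rw [integral_indicator measurableSet_Ioi, integral_const_mul, key_identity hc]
  -- final arithmetic
  have hba : b / a = B / A := by
    rw [ha_def, hb_def, mul_div_mul_left _ _ (by positivity : (4:ℝ) * Real.pi ≠ 0)]
  rw [hc_def, hba]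
  have hsq : Real.sqrt Real.pi * Real.sqrt Real.pi = Real.pi :=
    Real.mul_self_sqrt Real.pi_pos.le
  have key : (1:ℝ)/(4*Real.pi*B) * (2*Real.sqrt Real.pi) = 1/(2*Real.sqrt Real.pi*B) := by
    rw [div_mul_eq_mul_div, div_eq_div_iff (by positivity) (by positivity)]
    linear_combination 4*B*hsq
  calc 1/b * (2*Real.sqrt Real.pi*(Real.sqrt (1+B/A)-1))
      = (1/(4*Real.pi*B) * (2*Real.sqrt Real.pi)) * (Real.sqrt (1+B/A)-1) := by
        rw [hb_def]; ring
    _ = 1/(2*Real.sqrt Real.pi*B) * (Real.sqrt (1+B/A)-1) := by rw [key]
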